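/- (Hitczenko–Kwapień) Let a₁ ≥ a₂ ≥ ... ≥ aₙ ≥ 0 and S = Σᵢ₌₁ⁿ aᵢrᵢ with rᵢ i.i.d. uniform ±1. Then P(|S| ≥ (E S²)^{1/2}) > 1/10. -/

import Mathlib

open Classical
open Finset


variable {n : ℕ} (a : Fin n → ℝ)

/-- Rademacher sign. -/
def Rd (i : Fin n) (x : Fin n → Bool) : ℝ := if x i then 1 else -1

/-- partial sum over a finset of coordinates -/
def Sm (a : Fin n → ℝ) (s : Finset (Fin n)) (x : Fin n → Bool) : ℝ :=
  ∑ i ∈ s, a i * Rd i x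

/-- power sums -/
def Pw (a : Fin n → ℝ) (s : Finset (Fin n)) (k : ℕ) : ℝ := ∑ i ∈ s, (a i) ^ k

lemma Rd_sq (i : Fin n) (x : Fin n → Bool) : Rd i x ^ 2 = 1 := by
  unfold Rd; split <;> norm_num

def flp (j : Fin n) (x : Fin n → Bool) : Fin n → Bool :=
  Function.update x j (!(x j))

lemma flip_invol (j : Fin n) : Function.Involutive (flp j) := by
  intro x; funext y
  by_cases h : y = j
  · subst h; simp [flp]
  · simp [flp, Function.update_of_ne h]

lemma sum_flip (j : Fin n) (f : (Fin n → Bool) → ℝ) :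
    ∑ x : Fin n → Bool, f (flp j x) = ∑ x : Fin n → Bool, f x :=
  Function.Bijective.sum_comp ((flip_invol j).bijective) f

lemma Rd_flip_self (j : Fin n) (x : Fin n → Bool) : Rd j (flp j x) = - Rd j x := by
  unfold Rd flp
  rcases h : x j <;> simp [h]

lemma Rd_flip_ne (i j : Fin n) (h : i ≠ j) (x : Fin n → Bool) : Rd i (flp j x) = Rd i x := by
  unfold Rd flp
  rw [Function.update_of_ne h]

lemma Sm_flip (s : Finset (Fin n)) (j : Fin n) (hj : j ∉ s) (x : Fin n → Bool) :
    Sm a s (flp j x) = Sm a s x := by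
  unfold Sm
  refine Finset.sum_congr rfl fun i hi => ?_
  rw [Rd_flip_ne i j (fun h => hj (h ▸ hi)) x]
lemma pairpow2 (B c R : ℝ) (hR : R = 1 ∨ R = -1) :
    (B + c * R) ^ 2 + (B - c * R) ^ 2 = 2 * (B ^ 2 + c ^ 2) := by
  rcases hR with h | h <;> subst h <;> ring

lemma Erec2 (s : Finset (Fin n)) (j : Fin n) (hj : j ∉ s) :
    ∑ x : Fin n → Bool, Sm a (Finset.cons j s hj) x ^ 2
      = (∑ x : Fin n → Bool, Sm a s x ^ 2) + (2:ℝ) ^ n * a j ^ 2 := by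
  have key : ∀ x : Fin n → Bool, Sm a (Finset.cons j s hj) x = Sm a s x + a j * Rd j x := by
    intro x; rw [Sm, Finset.sum_cons]; unfold Sm; ring
  have hR : ∀ x : Fin n → Bool, Rd j x = 1 ∨ Rd j x = -1 := by
    intro x; unfold Rd; split
    · exact Or.inl rfl
    · exact Or.inr rfl
  have hflip : ∑ x : Fin n → Bool, (Sm a s x - a j * Rd j x) ^ 2
      = ∑ x : Fin n → Bool, (Sm a s x + a j * Rd j x) ^ 2 := by
    conv_rhs => rw [← sum_flip j (fun x => (Sm a s x + a j * Rd j x) ^ 2)]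
    refine Finset.sum_congr rfl fun x _ => ?_
    rw [Sm_flip a s j hj, Rd_flip_self]; ring
  calc ∑ x : Fin n → Bool, Sm a (Finset.cons j s hj) x ^ 2
      = ∑ x : Fin n → Bool, (Sm a s x + a j * Rd j x) ^ 2 := by simp only [key]
    _ = (1/2) * ((∑ x : Fin n → Bool, (Sm a s x + a j * Rd j x) ^ 2)
          + ∑ x : Fin n → Bool, (Sm a s x - a j * Rd j x) ^ 2) := by rw [hflip]; ring
    _ = (1/2) * ∑ x : Fin n → Bool, ((Sm a s x + a j * Rd j x) ^ 2 + (Sm a s x - a j * Rd j x) ^ 2) := by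
          rw [Finset.sum_add_distrib]
    _ = (1/2) * ∑ x : Fin n → Bool, (2 * (Sm a s x ^ 2 + a j ^ 2)) := by
          refine congrArg _ (Finset.sum_congr rfl fun x _ => pairpow2 (Sm a s x) (a j) (Rd j x) (hR x))
    _ = (∑ x : Fin n → Bool, Sm a s x ^ 2) + (2:ℝ) ^ n * a j ^ 2 := by
          simp only [Finset.sum_add_distrib, ← Finset.mul_sum, Finset.sum_const,
            Finset.card_univ, Fintype.card_fun, Fintype.card_bool, Fintype.card_fin,
            nsmul_eq_mul, Nat.cast_pow, Nat.cast_ofNat]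
          ring

lemma pairpow4 (B c R : ℝ) (hR : R = 1 ∨ R = -1) :
    (B + c * R) ^ 4 + (B - c * R) ^ 4 = 2 * (B ^ 4 + 6 * c ^ 2 * B ^ 2 + c ^ 4) := by
  rcases hR with h | h <;> subst h <;> ring

lemma Erec4 (s : Finset (Fin n)) (j : Fin n) (hj : j ∉ s) :
    ∑ x : Fin n → Bool, Sm a (Finset.cons j s hj) x ^ 4
      = (∑ x : Fin n → Bool, Sm a s x ^ 4) + 6 * a j ^ 2 * (∑ x : Fin n → Bool, Sm a s x ^ 2) + (2:ℝ) ^ n * a j ^ 4 := by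
  have key : ∀ x : Fin n → Bool, Sm a (Finset.cons j s hj) x = Sm a s x + a j * Rd j x := by
    intro x; rw [Sm, Finset.sum_cons]; unfold Sm; ring
  have hR : ∀ x : Fin n → Bool, Rd j x = 1 ∨ Rd j x = -1 := by
    intro x; unfold Rd; split
    · exact Or.inl rfl
    · exact Or.inr rfl
  have hflip : ∑ x : Fin n → Bool, (Sm a s x - a j * Rd j x) ^ 4
      = ∑ x : Fin n → Bool, (Sm a s x + a j * Rd j x) ^ 4 := by
    conv_rhs => rw [← sum_flip j (fun x => (Sm a s x + a j * Rd j x) ^ 4)]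
    refine Finset.sum_congr rfl fun x _ => ?_
    rw [Sm_flip a s j hj, Rd_flip_self]; ring
  calc ∑ x : Fin n → Bool, Sm a (Finset.cons j s hj) x ^ 4
      = ∑ x : Fin n → Bool, (Sm a s x + a j * Rd j x) ^ 4 := by simp only [key]
    _ = (1/2) * ((∑ x : Fin n → Bool, (Sm a s x + a j * Rd j x) ^ 4)
          + ∑ x : Fin n → Bool, (Sm a s x - a j * Rd j x) ^ 4) := by rw [hflip]; ring
    _ = (1/2) * ∑ x : Fin n → Bool, ((Sm a s x + a j * Rd j x) ^ 4 + (Sm a s x - a j * Rd j x) ^ 4) := by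
          rw [Finset.sum_add_distrib]
    _ = (1/2) * ∑ x : Fin n → Bool, (2 * (Sm a s x ^ 4 + 6 * a j ^ 2 * Sm a s x ^ 2 + a j ^ 4)) := by
          refine congrArg _ (Finset.sum_congr rfl fun x _ => pairpow4 (Sm a s x) (a j) (Rd j x) (hR x))
    _ = (∑ x : Fin n → Bool, Sm a s x ^ 4) + 6 * a j ^ 2 * (∑ x : Fin n → Bool, Sm a s x ^ 2) + (2:ℝ) ^ n * a j ^ 4 := by
          simp only [Finset.sum_add_distrib, ← Finset.mul_sum, Finset.sum_const,
            Finset.card_univ, Fintype.card_fun, Fintype.card_bool, Fintype.card_fin,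
            nsmul_eq_mul, Nat.cast_pow, Nat.cast_ofNat]
          ring

lemma pairpow6 (B c R : ℝ) (hR : R = 1 ∨ R = -1) :
    (B + c * R) ^ 6 + (B - c * R) ^ 6 = 2 * (B ^ 6 + 15 * c ^ 2 * B ^ 4 + 15 * c ^ 4 * B ^ 2 + c ^ 6) := by
  rcases hR with h | h <;> subst h <;> ring

lemma Erec6 (s : Finset (Fin n)) (j : Fin n) (hj : j ∉ s) :
    ∑ x : Fin n → Bool, Sm a (Finset.cons j s hj) x ^ 6
      = (∑ x : Fin n → Bool, Sm a s x ^ 6) + 15 * a j ^ 2 * (∑ x : Fin n → Bool, Sm a s x ^ 4) + 15 * a j ^ 4 * (∑ x : Fin n → Bool, Sm a s x ^ 2) + (2:ℝ) ^ n * a j ^ 6 := by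
  have key : ∀ x : Fin n → Bool, Sm a (Finset.cons j s hj) x = Sm a s x + a j * Rd j x := by
    intro x; rw [Sm, Finset.sum_cons]; unfold Sm; ring
  have hR : ∀ x : Fin n → Bool, Rd j x = 1 ∨ Rd j x = -1 := by
    intro x; unfold Rd; split
    · exact Or.inl rfl
    · exact Or.inr rfl
  have hflip : ∑ x : Fin n → Bool, (Sm a s x - a j * Rd j x) ^ 6
      = ∑ x : Fin n → Bool, (Sm a s x + a j * Rd j x) ^ 6 := by
    conv_rhs => rw [← sum_flip j (fun x => (Sm a s x + a j * Rd j x) ^ 6)]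
    refine Finset.sum_congr rfl fun x _ => ?_
    rw [Sm_flip a s j hj, Rd_flip_self]; ring
  calc ∑ x : Fin n → Bool, Sm a (Finset.cons j s hj) x ^ 6
      = ∑ x : Fin n → Bool, (Sm a s x + a j * Rd j x) ^ 6 := by simp only [key]
    _ = (1/2) * ((∑ x : Fin n → Bool, (Sm a s x + a j * Rd j x) ^ 6)
          + ∑ x : Fin n → Bool, (Sm a s x - a j * Rd j x) ^ 6) := by rw [hflip]; ring
    _ = (1/2) * ∑ x : Fin n → Bool, ((Sm a s x + a j * Rd j x) ^ 6 + (Sm a s x - a j * Rd j x) ^ 6) := by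
          rw [Finset.sum_add_distrib]
    _ = (1/2) * ∑ x : Fin n → Bool, (2 * (Sm a s x ^ 6 + 15 * a j ^ 2 * Sm a s x ^ 4 + 15 * a j ^ 4 * Sm a s x ^ 2 + a j ^ 6)) := by
          refine congrArg _ (Finset.sum_congr rfl fun x _ => pairpow6 (Sm a s x) (a j) (Rd j x) (hR x))
    _ = (∑ x : Fin n → Bool, Sm a s x ^ 6) + 15 * a j ^ 2 * (∑ x : Fin n → Bool, Sm a s x ^ 4) + 15 * a j ^ 4 * (∑ x : Fin n → Bool, Sm a s x ^ 2) + (2:ℝ) ^ n * a j ^ 6 := by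
          simp only [Finset.sum_add_distrib, ← Finset.mul_sum, Finset.sum_const,
            Finset.card_univ, Fintype.card_fun, Fintype.card_bool, Fintype.card_fin,
            nsmul_eq_mul, Nat.cast_pow, Nat.cast_ofNat]
          ring

lemma pairpow8 (B c R : ℝ) (hR : R = 1 ∨ R = -1) :
    (B + c * R) ^ 8 + (B - c * R) ^ 8 = 2 * (B ^ 8 + 28 * c ^ 2 * B ^ 6 + 70 * c ^ 4 * B ^ 4 + 28 * c ^ 6 * B ^ 2 + c ^ 8) := by
  rcases hR with h | h <;> subst h <;> ring

lemma Erec8 (s : Finset (Fin n)) (j : Fin n) (hj : j ∉ s) :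
    ∑ x : Fin n → Bool, Sm a (Finset.cons j s hj) x ^ 8
      = (∑ x : Fin n → Bool, Sm a s x ^ 8) + 28 * a j ^ 2 * (∑ x : Fin n → Bool, Sm a s x ^ 6) + 70 * a j ^ 4 * (∑ x : Fin n → Bool, Sm a s x ^ 4) + 28 * a j ^ 6 * (∑ x : Fin n → Bool, Sm a s x ^ 2) + (2:ℝ) ^ n * a j ^ 8 := by
  have key : ∀ x : Fin n → Bool, Sm a (Finset.cons j s hj) x = Sm a s x + a j * Rd j x := by
    intro x; rw [Sm, Finset.sum_cons]; unfold Sm; ring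
  have hR : ∀ x : Fin n → Bool, Rd j x = 1 ∨ Rd j x = -1 := by
    intro x; unfold Rd; split
    · exact Or.inl rfl
    · exact Or.inr rfl
  have hflip : ∑ x : Fin n → Bool, (Sm a s x - a j * Rd j x) ^ 8
      = ∑ x : Fin n → Bool, (Sm a s x + a j * Rd j x) ^ 8 := by
    conv_rhs => rw [← sum_flip j (fun x => (Sm a s x + a j * Rd j x) ^ 8)]
    refine Finset.sum_congr rfl fun x _ => ?_
    rw [Sm_flip a s j hj, Rd_flip_self]; ring
  calc ∑ x : Fin n → Bool, Sm a (Finset.cons j s hj) x ^ 8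
      = ∑ x : Fin n → Bool, (Sm a s x + a j * Rd j x) ^ 8 := by simp only [key]
    _ = (1/2) * ((∑ x : Fin n → Bool, (Sm a s x + a j * Rd j x) ^ 8)
          + ∑ x : Fin n → Bool, (Sm a s x - a j * Rd j x) ^ 8) := by rw [hflip]; ring
    _ = (1/2) * ∑ x : Fin n → Bool, ((Sm a s x + a j * Rd j x) ^ 8 + (Sm a s x - a j * Rd j x) ^ 8) := by
          rw [Finset.sum_add_distrib]
    _ = (1/2) * ∑ x : Fin n → Bool, (2 * (Sm a s x ^ 8 + 28 * a j ^ 2 * Sm a s x ^ 6 + 70 * a j ^ 4 * Sm a s x ^ 4 + 28 * a j ^ 6 * Sm a s x ^ 2 + a j ^ 8)) := by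
          refine congrArg _ (Finset.sum_congr rfl fun x _ => pairpow8 (Sm a s x) (a j) (Rd j x) (hR x))
    _ = (∑ x : Fin n → Bool, Sm a s x ^ 8) + 28 * a j ^ 2 * (∑ x : Fin n → Bool, Sm a s x ^ 6) + 70 * a j ^ 4 * (∑ x : Fin n → Bool, Sm a s x ^ 4) + 28 * a j ^ 6 * (∑ x : Fin n → Bool, Sm a s x ^ 2) + (2:ℝ) ^ n * a j ^ 8 := by
          simp only [Finset.sum_add_distrib, ← Finset.mul_sum, Finset.sum_const,
            Finset.card_univ, Fintype.card_fun, Fintype.card_bool, Fintype.card_fin,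
            nsmul_eq_mul, Nat.cast_pow, Nat.cast_ofNat]
          ring

lemma pairpow10 (B c R : ℝ) (hR : R = 1 ∨ R = -1) :
    (B + c * R) ^ 10 + (B - c * R) ^ 10 = 2 * (B ^ 10 + 45 * c ^ 2 * B ^ 8 + 210 * c ^ 4 * B ^ 6 + 210 * c ^ 6 * B ^ 4 + 45 * c ^ 8 * B ^ 2 + c ^ 10) := by
  rcases hR with h | h <;> subst h <;> ring

lemma Erec10 (s : Finset (Fin n)) (j : Fin n) (hj : j ∉ s) :
    ∑ x : Fin n → Bool, Sm a (Finset.cons j s hj) x ^ 10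
      = (∑ x : Fin n → Bool, Sm a s x ^ 10) + 45 * a j ^ 2 * (∑ x : Fin n → Bool, Sm a s x ^ 8) + 210 * a j ^ 4 * (∑ x : Fin n → Bool, Sm a s x ^ 6) + 210 * a j ^ 6 * (∑ x : Fin n → Bool, Sm a s x ^ 4) + 45 * a j ^ 8 * (∑ x : Fin n → Bool, Sm a s x ^ 2) + (2:ℝ) ^ n * a j ^ 10 := by
  have key : ∀ x : Fin n → Bool, Sm a (Finset.cons j s hj) x = Sm a s x + a j * Rd j x := by
    intro x; rw [Sm, Finset.sum_cons]; unfold Sm; ring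
  have hR : ∀ x : Fin n → Bool, Rd j x = 1 ∨ Rd j x = -1 := by
    intro x; unfold Rd; split
    · exact Or.inl rfl
    · exact Or.inr rfl
  have hflip : ∑ x : Fin n → Bool, (Sm a s x - a j * Rd j x) ^ 10
      = ∑ x : Fin n → Bool, (Sm a s x + a j * Rd j x) ^ 10 := by
    conv_rhs => rw [← sum_flip j (fun x => (Sm a s x + a j * Rd j x) ^ 10)]
    refine Finset.sum_congr rfl fun x _ => ?_
    rw [Sm_flip a s j hj, Rd_flip_self]; ring
  calc ∑ x : Fin n → Bool, Sm a (Finset.cons j s hj) x ^ 10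
      = ∑ x : Fin n → Bool, (Sm a s x + a j * Rd j x) ^ 10 := by simp only [key]
    _ = (1/2) * ((∑ x : Fin n → Bool, (Sm a s x + a j * Rd j x) ^ 10)
          + ∑ x : Fin n → Bool, (Sm a s x - a j * Rd j x) ^ 10) := by rw [hflip]; ring
    _ = (1/2) * ∑ x : Fin n → Bool, ((Sm a s x + a j * Rd j x) ^ 10 + (Sm a s x - a j * Rd j x) ^ 10) := by
          rw [Finset.sum_add_distrib]
    _ = (1/2) * ∑ x : Fin n → Bool, (2 * (Sm a s x ^ 10 + 45 * a j ^ 2 * Sm a s x ^ 8 + 210 * a j ^ 4 * Sm a s x ^ 6 + 210 * a j ^ 6 * Sm a s x ^ 4 + 45 * a j ^ 8 * Sm a s x ^ 2 + a j ^ 10)) := by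
          refine congrArg _ (Finset.sum_congr rfl fun x _ => pairpow10 (Sm a s x) (a j) (Rd j x) (hR x))
    _ = (∑ x : Fin n → Bool, Sm a s x ^ 10) + 45 * a j ^ 2 * (∑ x : Fin n → Bool, Sm a s x ^ 8) + 210 * a j ^ 4 * (∑ x : Fin n → Bool, Sm a s x ^ 6) + 210 * a j ^ 6 * (∑ x : Fin n → Bool, Sm a s x ^ 4) + 45 * a j ^ 8 * (∑ x : Fin n → Bool, Sm a s x ^ 2) + (2:ℝ) ^ n * a j ^ 10 := by
          simp only [Finset.sum_add_distrib, ← Finset.mul_sum, Finset.sum_const,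
            Finset.card_univ, Fintype.card_fun, Fintype.card_bool, Fintype.card_fin,
            nsmul_eq_mul, Nat.cast_pow, Nat.cast_ofNat]
          ring
lemma moments (s : Finset (Fin n)) :
    ((∑ x : Fin n → Bool, Sm a s x ^ 2) = 2 ^ n * Pw a s 2)
  ∧ ((∑ x : Fin n → Bool, Sm a s x ^ 4) = 2 ^ n * (3 * Pw a s 2 ^ 2 - 2 * Pw a s 4))
  ∧ ((∑ x : Fin n → Bool, Sm a s x ^ 6)
      = 2 ^ n * (15 * Pw a s 2 ^ 3 - 30 * Pw a s 2 * Pw a s 4 + 16 * Pw a s 6))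
  ∧ ((∑ x : Fin n → Bool, Sm a s x ^ 8)
      = 2 ^ n * (105 * Pw a s 2 ^ 4 - 420 * Pw a s 2 ^ 2 * Pw a s 4 + 140 * Pw a s 4 ^ 2
          + 448 * Pw a s 2 * Pw a s 6 - 272 * Pw a s 8))
  ∧ ((∑ x : Fin n → Bool, Sm a s x ^ 10)
      = 2 ^ n * (945 * Pw a s 2 ^ 5 - 6300 * Pw a s 2 ^ 3 * Pw a s 4
          + 6300 * Pw a s 2 * Pw a s 4 ^ 2 + 10080 * Pw a s 2 ^ 2 * Pw a s 6
          - 6720 * Pw a s 4 * Pw a s 6 - 12240 * Pw a s 2 * Pw a s 8 + 7936 * Pw a s 10)) := by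
  induction s using Finset.cons_induction with
  | empty =>
      simp [Sm, Pw]
  | cons j s hj ih =>
      obtain ⟨ih2, ih4, ih6, ih8, ih10⟩ := ih
      have hP : ∀ k : ℕ, Pw a (Finset.cons j s hj) k = a j ^ k + Pw a s k := by
        intro k; rw [Pw, Finset.sum_cons]; rfl
      refine ⟨?_, ?_, ?_, ?_, ?_⟩
      · rw [Erec2 a s j hj, ih2, hP]; ring
      · rw [Erec4 a s j hj, ih2, ih4, hP, hP]; ring
      · rw [Erec6 a s j hj, ih2, ih4, ih6, hP, hP, hP]; ring
      · rw [Erec8 a s j hj, ih2, ih4, ih6, ih8, hP, hP, hP, hP]; ring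
      · rw [Erec10 a s j hj, ih2, ih4, ih6, ih8, ih10, hP, hP, hP, hP, hP]; ring
/-- Case 2 pointwise certificate: the quintic minorant of the indicator. -/
lemma c2_pointwise (t : ℝ) (ht : 0 ≤ t) :
    (-40827099725/127230015492) * t + (54080788831675/132170781093606) * t^2
      + (-76313898809125/793024686561636) * t^3 + (540738171250/66085390546803) * t^4
      + (-46094912500/198256171640409) * t^5
    ≤ (if 1 ≤ t then (1:ℝ) else 0) := by
  split_ifs with h
  · -- t ≥ 1 : q t ≤ 1 since 1 - q = μ (t-b1)² (t-b2)² (t-e)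
    nlinarith [sq_nonneg ((t - 23/5) * (t - 271/20)),
      mul_nonneg (sq_nonneg ((t - 23/5) * (t - 271/20)))
        (by linarith : (0:ℝ) ≤ t + 20412324/18437965)]
  · -- 0 ≤ t < 1 : q t = -(t (1-t) w t) ≤ 0
    push_neg at h
    have hw : (0:ℝ) ≤ 40827099725/127230015492 + (-70009420404125/793024686561636) * t
        + (1576119601250/198256171640409) * t^2 + (-46094912500/198256171640409) * t^3 := by
      nlinarith [pow_le_one₀ ht h.le (n := 3), pow_le_one₀ ht h.le (n := 2), sq_nonneg t,
        mul_nonneg ht ht]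
    nlinarith [mul_nonneg (mul_nonneg ht (by linarith : (0:ℝ) ≤ 1 - t)) hw]

/-- Case 1 pointwise certificate: the quartic minorant of the indicator at 9/31. -/
lemma c1_pointwise (t : ℝ) (ht : 0 ≤ t) :
    (-2095013727/7893789409) + (7779740904/7893789409) * t + (-7980144961/31575157636) * t^2
      + (374026005/15787578818) * t^3 + (-23088025/31575157636) * t^4
    ≤ (if (9:ℝ)/31 ≤ t then (1:ℝ) else 0) := by
  split_ifs with h
  · nlinarith [sq_nonneg ((t - 16/5) * (t - 13))]
  · push_neg at h
    have h1 : (0:ℝ) ≤ 9/31 - t := by linarith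
    have h2 : (0:ℝ) ≤ 16/5 + 13 - 9/31 - t := by linarith
    nlinarith [mul_nonneg h1 h2, sq_nonneg ((16/5 - t)*(13 - t) + (16/5 - 9/31)*(13 - 9/31)),
      mul_nonneg (mul_nonneg h1 h2) (mul_nonneg h1 h2),
      mul_nonneg (mul_nonneg h1 h2) ht]
lemma c2_region (u4 u6 u8 u10 : ℝ) (h4 : 0 ≤ u4) (h6 : 0 ≤ u6) (h8 : 0 ≤ u8)
    (h10 : 0 ≤ u10) (hc4 : u4 ≤ 121/400) (hc6 : u6 ≤ 121/400 * u4)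
    (hc8 : u8 ≤ 121/400 * u6) (hc10 : u10 ≤ 121/400 * u8) :
    (41:ℝ)/400 ≤ (-40827099725/127230015492)
      + (54080788831675/132170781093606) * (3 - 2*u4)
      + (-76313898809125/793024686561636) * (15 - 30*u4 + 16*u6)
      + (540738171250/66085390546803) * (105 - 420*u4 + 140*u4^2 + 448*u6 - 272*u8)
      + (-46094912500/198256171640409) * (945 - 6300*u4 + 6300*u4^2 + 10080*u6
          - 6720*u4*u6 - 12240*u8 + 7936*u10) := by
  nlinarith [mul_nonneg h4 (by linarith : (0:ℝ) ≤ 121/400 - u4),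
    mul_nonneg h4 h6,
    mul_nonneg (by linarith : (0:ℝ) ≤ 121/400 * u4 - u6) (by linarith : (0:ℝ) ≤ 121/400 - u4),
    mul_nonneg h8 h8]

lemma c1_region (u4 u6 u8 : ℝ) (h4 : 0 ≤ u4) (h6 : 0 ≤ u6) (h8 : 0 ≤ u8) (hc4 : u4 ≤ 1) :
    (1:ℝ)/5 + 1/30 ≤ (-2095013727/7893789409)
      + (7779740904/7893789409)
      + (-7980144961/31575157636) * (3 - 2*u4)
      + (374026005/15787578818) * (15 - 30*u4 + 16*u6)
      + (-23088025/31575157636) * (105 - 420*u4 + 140*u4^2 + 448*u6 - 272*u8) := by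
  nlinarith [mul_nonneg (by linarith : (0:ℝ) ≤ 1 - u4)
      (by nlinarith : (0:ℝ) ≤ 8311689/15787578818 + (808080875/7893789409) * u4)]
lemma pairing (j : Fin n) (haj : 0 ≤ a j) (θ : ℝ)
    (hθ : θ ≤ a j + θ) :
    (Finset.univ.filter fun x : Fin n → Bool =>
        θ ≤ |Sm a (Finset.univ.erase j) x|).card
      ≤ 2 * (Finset.univ.filter fun x : Fin n → Bool =>
        a j + θ ≤ |Sm a Finset.univ x|).card := by
  classical
  set T : (Fin n → Bool) → ℝ := fun x => Sm a (Finset.univ.erase j) x with hT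
  have hdecomp : ∀ x : Fin n → Bool, Sm a Finset.univ x = a j * Rd j x + T x := by
    intro x
    show Sm a Finset.univ x = a j * Rd j x + Sm a (Finset.univ.erase j) x
    simp only [Sm]
    rw [← Finset.add_sum_erase _ _ (Finset.mem_univ j)]
  have hTflip : ∀ x, T (flp j x) = T x := by
    intro x; exact Sm_flip a _ j (Finset.notMem_erase j Finset.univ) x
  set B := Finset.univ.filter fun x : Fin n → Bool => θ ≤ |T x| with hB
  set A := Finset.univ.filter fun x : Fin n → Bool => a j + θ ≤ |Sm a Finset.univ x| with hA
  set B1 := B.filter (fun x => x j = true) with hB1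
  set B2 := B.filter (fun x => ¬ (x j = true)) with hB2
  have hsplit : B1.card + B2.card = B.card := Finset.card_filter_add_card_filter_not _
  -- B1 and B2 have equal cardinality via flp
  have hcardeq : B1.card = B2.card := by
    apply Finset.card_bij (fun x _ => flp j x)
    · intro x hx
      rw [hB1, Finset.mem_filter] at hx
      obtain ⟨hxB, hxj⟩ := hx
      rw [hB, Finset.mem_filter] at hxB
      rw [hB2, Finset.mem_filter, hB, Finset.mem_filter]
      refine ⟨⟨Finset.mem_univ _, ?_⟩, ?_⟩
      · rw [hTflip]; exact hxB.2
      · simp [flp, hxj]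
    · intro x hx y hy hxy
      have := congrArg (flp j) hxy
      rwa [flip_invol j x, flip_invol j y] at this
    · intro y hy
      refine ⟨flp j y, ?_, flip_invol j y⟩
      rw [hB2, Finset.mem_filter, hB, Finset.mem_filter] at hy
      rw [hB1, Finset.mem_filter, hB, Finset.mem_filter]
      have hyj : y j = false := by
        rcases h : y j with _ | _
        · rfl
        · exact absurd h hy.2
      refine ⟨⟨Finset.mem_univ _, ?_⟩, ?_⟩
      · rw [hTflip]; exact hy.1.2
      · simp [flp, hyj]
  -- injection from B1 into A
  have hinj : B1.card ≤ A.card := by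
    apply Finset.card_le_card_of_injOn (fun x => if 0 ≤ T x then x else flp j x)
    · intro x hx
      rw [hB1, Finset.mem_coe, Finset.mem_filter] at hx
      obtain ⟨hxB, hxj⟩ := hx
      rw [hB, Finset.mem_filter] at hxB
      have hth : θ ≤ |T x| := hxB.2
      have hRdx : Rd j x = 1 := by unfold Rd; rw [hxj]; norm_num
      rw [hA, Finset.mem_coe, Finset.mem_filter]
      refine ⟨Finset.mem_univ _, ?_⟩
      by_cases h0 : 0 ≤ T x
      · simp only [if_pos h0]
        rw [hdecomp x, hRdx]
        have : |T x| = T x := abs_of_nonneg h0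
        have h1 : a j + θ ≤ a j * 1 + T x := by rw [this] at hth; linarith
        exact le_trans h1 (le_abs_self _)
      · simp only [if_neg h0]
        push_neg at h0
        rw [hdecomp (flp j x), hTflip, Rd_flip_self, hRdx]
        have : |T x| = - T x := abs_of_neg h0
        have h1 : a j + θ ≤ -(a j * - 1 + T x) := by rw [this] at hth; linarith
        exact le_trans h1 (neg_le_abs _)
    · intro x hx y hy hxy
      simp only [Finset.mem_coe, hB1, Finset.mem_filter] at hx hy
      simp only at hxy
      have hxj := hx.2; have hyj := hy.2
      by_cases h0x : 0 ≤ T x <;> by_cases h0y : 0 ≤ T y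
      · rwa [if_pos h0x, if_pos h0y] at hxy
      · rw [if_pos h0x, if_neg h0y] at hxy
        exfalso
        have : x j = (flp j y) j := by rw [hxy]
        rw [hxj] at this
        simp [flp, hyj] at this
      · rw [if_neg h0x, if_pos h0y] at hxy
        exfalso
        have : (flp j x) j = y j := by rw [hxy]
        rw [hyj] at this
        simp [flp, hxj] at this
      · rw [if_neg h0x, if_neg h0y] at hxy
        have := congrArg (flp j) hxy
        rwa [flip_invol j x, flip_invol j y] at this
  omega
lemma div_chain (p q V c : ℝ) (hV : 0 < V) (h : p ≤ c * V * q) (k : ℕ) :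
    p / V ^ (k + 1) ≤ c * (q / V ^ k) := by
  have h1 : (0:ℝ) < V ^ (k+1) := by positivity
  rw [div_le_iff₀ h1]
  have h2 : c * (q / V ^ k) * V ^ (k + 1) = c * V * q := by
    field_simp; ring
  rw [h2]; exact h

set_option maxHeartbeats 4000000 in
lemma main (ha : ∀ i j : Fin n, i ≤ j → a j ≤ a i) (ha0 : ∀ i, 0 ≤ a i) :
    1 / 10 <
      ((Finset.univ.filter fun x : Fin n → Bool =>
          Real.sqrt ((∑ y : Fin n → Bool, Sm a Finset.univ y ^ 2) / 2 ^ n)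
            ≤ |Sm a Finset.univ x|).card : ℝ) / 2 ^ n := by
  classical
  have h2n : (0:ℝ) < 2 ^ n := by positivity
  obtain ⟨hM2, hM4, hM6, hM8, hM10⟩ := moments a (Finset.univ : Finset (Fin n))
  set V := Pw a Finset.univ 2 with hVdef
  have hV0 : 0 ≤ V := Finset.sum_nonneg (fun i _ => by positivity)
  have hEdiv : (∑ y : Fin n → Bool, Sm a Finset.univ y ^ 2) / 2 ^ n = V := by
    rw [hM2]; field_simp
  rw [hEdiv]
  by_cases hV : V = 0
  · have hfil : (Finset.univ.filter fun x : Fin n → Bool =>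
        Real.sqrt V ≤ |Sm a Finset.univ x|) = Finset.univ := by
      apply Finset.filter_true_of_mem
      intro x _
      rw [hV, Real.sqrt_zero]
      exact abs_nonneg _
    rw [hfil]
    have hcu : ((Finset.univ : Finset (Fin n → Bool)).card : ℝ) = 2 ^ n := by
      simp [Fintype.card_fun]
    rw [hcu, div_self (ne_of_gt h2n)]
    norm_num
  have hVpos : 0 < V := lt_of_le_of_ne hV0 (Ne.symm hV)
  have hn : n ≠ 0 := by
    rintro rfl
    exact hV (by simp [hVdef, Pw])
  haveI : NeZero n := ⟨hn⟩
  have ha0max : ∀ i : Fin n, a i ^ 2 ≤ a 0 ^ 2 := by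
    intro i
    have h1 : a i ≤ a 0 := ha 0 i (Fin.zero_le i)
    nlinarith [ha0 i]
  have hPw2_ge : (a 0) ^ 2 ≤ V := by
    rw [hVdef, Pw]
    exact Finset.single_le_sum (f := fun i => a i ^ 2) (fun i _ => by positivity)
      (Finset.mem_univ 0)
  set A := Finset.univ.filter fun x : Fin n → Bool =>
      Real.sqrt V ≤ |Sm a Finset.univ x| with hAdef
  by_cases hcase : (a 0) ^ 2 ≤ 121 / 400 * V
  · -- CASE 2 : small first coefficient, degree-5 certificate
    have hstep : ∀ k : ℕ, Pw a Finset.univ (k + 2) ≤ (a 0) ^ 2 * Pw a Finset.univ k := by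
      intro k
      rw [Pw, Pw, Finset.mul_sum]
      apply Finset.sum_le_sum
      intro i _
      calc a i ^ (k + 2) = a i ^ 2 * a i ^ k := by ring
        _ ≤ a 0 ^ 2 * a i ^ k :=
            mul_le_mul_of_nonneg_right (ha0max i) (pow_nonneg (ha0 i) k)
    have hPw_nonneg : ∀ k : ℕ, 0 ≤ Pw a Finset.univ k := by
      intro k
      apply Finset.sum_nonneg
      intro i _
      exact pow_nonneg (ha0 i) k
    have hp2 : Pw a Finset.univ 2 = V := hVdef.symm
    have hchain : ∀ k : ℕ, Pw a Finset.univ (k + 2) ≤ 121/400 * V * Pw a Finset.univ k := by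
      intro k
      refine le_trans (hstep k) ?_
      exact mul_le_mul_of_nonneg_right hcase (hPw_nonneg k)
    set u4 := Pw a Finset.univ 4 / V ^ 2 with hu4
    set u6 := Pw a Finset.univ 6 / V ^ 3 with hu6
    set u8 := Pw a Finset.univ 8 / V ^ 4 with hu8
    set u10 := Pw a Finset.univ 10 / V ^ 5 with hu10
    have h4n : 0 ≤ u4 := by
      rw [hu4]; exact div_nonneg (hPw_nonneg 4) (by positivity)
    have h6n : 0 ≤ u6 := by
      rw [hu6]; exact div_nonneg (hPw_nonneg 6) (by positivity)
    have h8n : 0 ≤ u8 := by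
      rw [hu8]; exact div_nonneg (hPw_nonneg 8) (by positivity)
    have h10n : 0 ≤ u10 := by
      rw [hu10]; exact div_nonneg (hPw_nonneg 10) (by positivity)
    have hc4 : u4 ≤ 121/400 := by
      have h1 := div_chain (Pw a Finset.univ 4) (Pw a Finset.univ 2) V (121/400) hVpos
        (by simpa using hchain 2) 1
      rw [hp2] at h1
      rw [hu4]
      calc Pw a Finset.univ 4 / V ^ 2 ≤ 121/400 * (V / V ^ 1) := by
            convert h1 using 2 <;> norm_num
        _ = 121/400 := by
            rw [pow_one, div_self (ne_of_gt hVpos), mul_one]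
    have hc6 : u6 ≤ 121/400 * u4 := by
      have h1 := div_chain (Pw a Finset.univ 6) (Pw a Finset.univ 4) V (121/400) hVpos
        (by simpa using hchain 4) 2
      rw [hu6, hu4]
      convert h1 using 2 <;> norm_num
    have hc8 : u8 ≤ 121/400 * u6 := by
      have h1 := div_chain (Pw a Finset.univ 8) (Pw a Finset.univ 6) V (121/400) hVpos
        (by simpa using hchain 6) 3
      rw [hu8, hu6]
      convert h1 using 2 <;> norm_num
    have hc10 : u10 ≤ 121/400 * u8 := by
      have h1 := div_chain (Pw a Finset.univ 10) (Pw a Finset.univ 8) V (121/400) hVpos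
        (by simpa using hchain 8) 4
      rw [hu10, hu8]
      convert h1 using 2 <;> norm_num
    have hpt : ∀ x : Fin n → Bool,
        (-40827099725/127230015492) * (Sm a Finset.univ x ^ 2 / V)
          + (54080788831675/132170781093606) * (Sm a Finset.univ x ^ 2 / V) ^ 2
          + (-76313898809125/793024686561636) * (Sm a Finset.univ x ^ 2 / V) ^ 3
          + (540738171250/66085390546803) * (Sm a Finset.univ x ^ 2 / V) ^ 4
          + (-46094912500/198256171640409) * (Sm a Finset.univ x ^ 2 / V) ^ 5
        ≤ (if Real.sqrt V ≤ |Sm a Finset.univ x| then (1:ℝ) else 0) := by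
      intro x
      have ht0 : 0 ≤ Sm a Finset.univ x ^ 2 / V := by positivity
      have hcert := c2_pointwise (Sm a Finset.univ x ^ 2 / V) ht0
      rcases le_or_gt (Real.sqrt V) |Sm a Finset.univ x| with h | h
      · rw [if_pos h]
        split_ifs at hcert with h1
        · exact hcert
        · linarith
      · rw [if_neg (not_le.2 h)]
        have habs : 0 ≤ |Sm a Finset.univ x| := abs_nonneg _
        have hsq : Sm a Finset.univ x ^ 2 < V := by
          have h1 : |Sm a Finset.univ x| ^ 2 < Real.sqrt V ^ 2 := by
            apply pow_lt_pow_left₀ h habs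
            norm_num
          rw [Real.sq_sqrt hV0] at h1
          rwa [sq_abs] at h1
        have ht1 : ¬ (1 ≤ Sm a Finset.univ x ^ 2 / V) := by
          rw [not_le, div_lt_one hVpos]
          exact hsq
        rwa [if_neg ht1] at hcert
    have hsum : ∑ x : Fin n → Bool,
        ((-40827099725/127230015492) * (Sm a Finset.univ x ^ 2 / V)
          + (54080788831675/132170781093606) * (Sm a Finset.univ x ^ 2 / V) ^ 2
          + (-76313898809125/793024686561636) * (Sm a Finset.univ x ^ 2 / V) ^ 3
          + (540738171250/66085390546803) * (Sm a Finset.univ x ^ 2 / V) ^ 4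
          + (-46094912500/198256171640409) * (Sm a Finset.univ x ^ 2 / V) ^ 5)
        ≤ (A.card : ℝ) := by
      calc _ ≤ ∑ x : Fin n → Bool,
          (if Real.sqrt V ≤ |Sm a Finset.univ x| then (1:ℝ) else 0) :=
            Finset.sum_le_sum (fun x _ => hpt x)
        _ = (A.card : ℝ) := by rw [Finset.sum_boole]
    have hLHS : ∑ x : Fin n → Bool,
        ((-40827099725/127230015492) * (Sm a Finset.univ x ^ 2 / V)
          + (54080788831675/132170781093606) * (Sm a Finset.univ x ^ 2 / V) ^ 2
          + (-76313898809125/793024686561636) * (Sm a Finset.univ x ^ 2 / V) ^ 3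
          + (540738171250/66085390546803) * (Sm a Finset.univ x ^ 2 / V) ^ 4
          + (-46094912500/198256171640409) * (Sm a Finset.univ x ^ 2 / V) ^ 5)
        = 2 ^ n * ((-40827099725/127230015492)
          + (54080788831675/132170781093606) * (3 - 2*u4)
          + (-76313898809125/793024686561636) * (15 - 30*u4 + 16*u6)
          + (540738171250/66085390546803) * (105 - 420*u4 + 140*u4^2 + 448*u6 - 272*u8)
          + (-46094912500/198256171640409) * (945 - 6300*u4 + 6300*u4^2 + 10080*u6
              - 6720*u4*u6 - 12240*u8 + 7936*u10)) := by
      have e1 : ∀ x : Fin n → Bool,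
          (-40827099725/127230015492) * (Sm a Finset.univ x ^ 2 / V)
          + (54080788831675/132170781093606) * (Sm a Finset.univ x ^ 2 / V) ^ 2
          + (-76313898809125/793024686561636) * (Sm a Finset.univ x ^ 2 / V) ^ 3
          + (540738171250/66085390546803) * (Sm a Finset.univ x ^ 2 / V) ^ 4
          + (-46094912500/198256171640409) * (Sm a Finset.univ x ^ 2 / V) ^ 5
          = (-40827099725/127230015492/V) * Sm a Finset.univ x ^ 2
          + (54080788831675/132170781093606/V^2) * Sm a Finset.univ x ^ 4
          + (-76313898809125/793024686561636/V^3) * Sm a Finset.univ x ^ 6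
          + (540738171250/66085390546803/V^4) * Sm a Finset.univ x ^ 8
          + (-46094912500/198256171640409/V^5) * Sm a Finset.univ x ^ 10 := by
        intro x; ring
      rw [Finset.sum_congr rfl (fun x _ => e1 x)]
      rw [Finset.sum_add_distrib, Finset.sum_add_distrib, Finset.sum_add_distrib,
        Finset.sum_add_distrib, ← Finset.mul_sum, ← Finset.mul_sum, ← Finset.mul_sum,
        ← Finset.mul_sum, ← Finset.mul_sum, hM2, hM4, hM6, hM8, hM10]
      rw [hu4, hu6, hu8, hu10]
      field_simp
    have hreg := c2_region u4 u6 u8 u10 h4n h6n h8n h10n hc4 hc6 hc8 hc10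
    rw [hLHS] at hsum
    rw [lt_div_iff₀ h2n]
    nlinarith [hsum, hreg, h2n]
  · -- CASE 1 : large first coefficient, conditioning + quartic certificate
    push_neg at hcase
    set W := Pw a (Finset.univ.erase 0) 2 with hWdef
    obtain ⟨hN2, hN4, hN6, hN8, _⟩ := moments a (Finset.univ.erase (0 : Fin n))
    have hW0 : 0 ≤ W := Finset.sum_nonneg (fun i _ => by positivity)
    have hVW : V = a 0 ^ 2 + W := by
      rw [hVdef, hWdef, Pw, Pw, ← Finset.add_sum_erase _ _ (Finset.mem_univ 0)]
    have hs2 : Real.sqrt V ^ 2 = V := Real.sq_sqrt hV0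
    have hsnn : 0 ≤ Real.sqrt V := Real.sqrt_nonneg V
    have ha0le : a 0 ≤ Real.sqrt V := by nlinarith [hPw2_ge]
    -- pairing: card of B ≤ 2 * card of A
    have hpair := pairing a 0 (ha0 0) (Real.sqrt V - a 0) (by linarith [ha0 0])
    have hAeq : (Finset.univ.filter fun x : Fin n → Bool =>
        a 0 + (Real.sqrt V - a 0) ≤ |Sm a Finset.univ x|) = A := by
      rw [hAdef]
      congr 1
      funext x
      rw [add_sub_cancel]
    rw [hAeq] at hpair
    set B := Finset.univ.filter (fun x : Fin n → Bool =>
        Real.sqrt V - a 0 ≤ |Sm a (Finset.univ.erase 0) x|) with hBdef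
    -- it suffices to show B.card ≥ 2^n * 7/30
    have hBbig : 2 ^ n * (7/30 : ℝ) ≤ (B.card : ℝ) := by
      by_cases hWz : W = 0
      · -- B = univ
        have hsqrtV : Real.sqrt V = a 0 := by
          rw [hVW, hWz, add_zero]
          exact Real.sqrt_sq (ha0 0)
        have hBu : B = Finset.univ := by
          apply Finset.filter_true_of_mem
          intro x _
          rw [hsqrtV, sub_self]
          exact abs_nonneg _
        rw [hBu]
        have hcu : ((Finset.univ : Finset (Fin n → Bool)).card : ℝ) = 2 ^ n := by
          simp [Fintype.card_fun]
        rw [hcu]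
        nlinarith [h2n]
      · have hWpos : 0 < W := lt_of_le_of_ne hW0 (Ne.symm hWz)
        have hthr : (Real.sqrt V - a 0) ^ 2 ≤ 9/31 * W := by
          have h22 : 22 * Real.sqrt V ≤ 40 * a 0 := by
            nlinarith [hs2, hsnn, ha0 0, hVW, hcase]
          nlinarith [ha0le, hs2, hVW]
        have hNw_nonneg : ∀ k : ℕ, 0 ≤ Pw a (Finset.univ.erase 0) k := by
          intro k
          apply Finset.sum_nonneg
          intro i _
          exact pow_nonneg (ha0 i) k
        have hsingle : ∀ i ∈ Finset.univ.erase (0 : Fin n), a i ^ 2 ≤ W := by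
          intro i hi
          rw [hWdef, Pw]
          exact Finset.single_le_sum (f := fun i => a i ^ 2) (fun i _ => by positivity) hi
        have hchainW : ∀ k : ℕ, Pw a (Finset.univ.erase 0) (k + 2)
            ≤ W * Pw a (Finset.univ.erase 0) k := by
          intro k
          rw [Pw, Pw, Finset.mul_sum]
          apply Finset.sum_le_sum
          intro i hi
          calc a i ^ (k + 2) = a i ^ 2 * a i ^ k := by ring
            _ ≤ W * a i ^ k :=
                mul_le_mul_of_nonneg_right (hsingle i hi) (pow_nonneg (ha0 i) k)
        set v4 := Pw a (Finset.univ.erase 0) 4 / W ^ 2 with hv4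
        set v6 := Pw a (Finset.univ.erase 0) 6 / W ^ 3 with hv6
        set v8 := Pw a (Finset.univ.erase 0) 8 / W ^ 4 with hv8
        have hv4n : 0 ≤ v4 := by
          rw [hv4]; exact div_nonneg (hNw_nonneg 4) (by positivity)
        have hv6n : 0 ≤ v6 := by
          rw [hv6]; exact div_nonneg (hNw_nonneg 6) (by positivity)
        have hv8n : 0 ≤ v8 := by
          rw [hv8]; exact div_nonneg (hNw_nonneg 8) (by positivity)
        have hw2 : Pw a (Finset.univ.erase 0) 2 = W := hWdef.symm
        have hv4le : v4 ≤ 1 := by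
          have h1 := div_chain (Pw a (Finset.univ.erase 0) 4) (Pw a (Finset.univ.erase 0) 2)
            W 1 hWpos (by simpa using hchainW 2) 1
          rw [hw2] at h1
          rw [hv4]
          calc Pw a (Finset.univ.erase 0) 4 / W ^ 2 ≤ 1 * (W / W ^ 1) := by
                convert h1 using 2 <;> norm_num
            _ = 1 := by rw [pow_one, div_self (ne_of_gt hWpos), mul_one]
        have hpt1 : ∀ x : Fin n → Bool,
            (-2095013727/7893789409)
            + (7779740904/7893789409) * (Sm a (Finset.univ.erase 0) x ^ 2 / W)
            + (-7980144961/31575157636) * (Sm a (Finset.univ.erase 0) x ^ 2 / W) ^ 2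
            + (374026005/15787578818) * (Sm a (Finset.univ.erase 0) x ^ 2 / W) ^ 3
            + (-23088025/31575157636) * (Sm a (Finset.univ.erase 0) x ^ 2 / W) ^ 4
            ≤ (if Real.sqrt V - a 0 ≤ |Sm a (Finset.univ.erase 0) x| then (1:ℝ) else 0) := by
          intro x
          have ht0 : 0 ≤ Sm a (Finset.univ.erase 0) x ^ 2 / W := by positivity
          have hcert := c1_pointwise (Sm a (Finset.univ.erase 0) x ^ 2 / W) ht0
          rcases le_or_gt (Real.sqrt V - a 0) |Sm a (Finset.univ.erase 0) x| with h | h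
          · rw [if_pos h]
            split_ifs at hcert with h1
            · exact hcert
            · linarith
          · rw [if_neg (not_le.2 h)]
            have habs : 0 ≤ |Sm a (Finset.univ.erase 0) x| := abs_nonneg _
            have hthr0 : 0 ≤ Real.sqrt V - a 0 := by linarith [ha0le]
            have hsq : Sm a (Finset.univ.erase 0) x ^ 2 < 9/31 * W := by
              have h1 : |Sm a (Finset.univ.erase 0) x| ^ 2 < (Real.sqrt V - a 0) ^ 2 := by
                apply pow_lt_pow_left₀ h habs
                norm_num
              rw [sq_abs] at h1
              linarith [hthr]
            have ht1 : ¬ ((9:ℝ)/31 ≤ Sm a (Finset.univ.erase 0) x ^ 2 / W) := by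
              rw [not_le, div_lt_iff₀ hWpos]
              linarith
            rwa [if_neg ht1] at hcert
        have hsum1 : ∑ x : Fin n → Bool,
            ((-2095013727/7893789409)
            + (7779740904/7893789409) * (Sm a (Finset.univ.erase 0) x ^ 2 / W)
            + (-7980144961/31575157636) * (Sm a (Finset.univ.erase 0) x ^ 2 / W) ^ 2
            + (374026005/15787578818) * (Sm a (Finset.univ.erase 0) x ^ 2 / W) ^ 3
            + (-23088025/31575157636) * (Sm a (Finset.univ.erase 0) x ^ 2 / W) ^ 4)
            ≤ (B.card : ℝ) := by
          calc _ ≤ ∑ x : Fin n → Bool,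
              (if Real.sqrt V - a 0 ≤ |Sm a (Finset.univ.erase 0) x| then (1:ℝ) else 0) :=
                Finset.sum_le_sum (fun x _ => hpt1 x)
            _ = (B.card : ℝ) := by rw [Finset.sum_boole]
        have hLHS1 : ∑ x : Fin n → Bool,
            ((-2095013727/7893789409)
            + (7779740904/7893789409) * (Sm a (Finset.univ.erase 0) x ^ 2 / W)
            + (-7980144961/31575157636) * (Sm a (Finset.univ.erase 0) x ^ 2 / W) ^ 2
            + (374026005/15787578818) * (Sm a (Finset.univ.erase 0) x ^ 2 / W) ^ 3
            + (-23088025/31575157636) * (Sm a (Finset.univ.erase 0) x ^ 2 / W) ^ 4)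
            = 2 ^ n * ((-2095013727/7893789409)
              + (7779740904/7893789409)
              + (-7980144961/31575157636) * (3 - 2*v4)
              + (374026005/15787578818) * (15 - 30*v4 + 16*v6)
              + (-23088025/31575157636) * (105 - 420*v4 + 140*v4^2 + 448*v6 - 272*v8)) := by
          have e1 : ∀ x : Fin n → Bool,
              (-2095013727/7893789409)
              + (7779740904/7893789409) * (Sm a (Finset.univ.erase 0) x ^ 2 / W)
              + (-7980144961/31575157636) * (Sm a (Finset.univ.erase 0) x ^ 2 / W) ^ 2
              + (374026005/15787578818) * (Sm a (Finset.univ.erase 0) x ^ 2 / W) ^ 3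
              + (-23088025/31575157636) * (Sm a (Finset.univ.erase 0) x ^ 2 / W) ^ 4
              = (-2095013727/7893789409)
              + (7779740904/7893789409/W) * Sm a (Finset.univ.erase 0) x ^ 2
              + (-7980144961/31575157636/W^2) * Sm a (Finset.univ.erase 0) x ^ 4
              + (374026005/15787578818/W^3) * Sm a (Finset.univ.erase 0) x ^ 6
              + (-23088025/31575157636/W^4) * Sm a (Finset.univ.erase 0) x ^ 8 := by
            intro x; ring
          rw [Finset.sum_congr rfl (fun x _ => e1 x)]
          rw [Finset.sum_add_distrib, Finset.sum_add_distrib, Finset.sum_add_distrib,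
            Finset.sum_add_distrib, ← Finset.mul_sum, ← Finset.mul_sum, ← Finset.mul_sum,
            ← Finset.mul_sum, Finset.sum_const, Finset.card_univ, Fintype.card_fun,
            Fintype.card_bool, Fintype.card_fin, nsmul_eq_mul,
            hN2, hN4, hN6, hN8]
          rw [hv4, hv6, hv8]
          push_cast
          field_simp
          ring
        have hreg1 := c1_region v4 v6 v8 hv4n hv6n hv8n hv4le
        rw [hLHS1] at hsum1
        nlinarith [hsum1, hreg1, h2n]
    rw [lt_div_iff₀ h2n]
    have hcard : (B.card : ℝ) ≤ 2 * (A.card : ℝ) := by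
      exact_mod_cast hpair
    nlinarith [hBbig, hcard, h2n]
theorem stmt_10 (n : ℕ) (a : Fin n → ℝ)
    (ha : ∀ i j : Fin n, i ≤ j → a j ≤ a i) (ha0 : ∀ i, 0 ≤ a i) :
    1 / 10 <
      ((Finset.univ.filter fun x : Fin n → Bool =>
          Real.sqrt ((∑ y : Fin n → Bool,
              (∑ i, a i * (if y i then (1 : ℝ) else -1)) ^ 2) / 2 ^ n)
            ≤ |∑ i, a i * (if x i then (1 : ℝ) else -1)|).card : ℝ) / 2 ^ n := by
  have h := main a ha ha0
  simp only [Sm, Rd] at h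
  convert h using 4
  ext x; simp
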